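/- In the exact-data case δ = 0 (i.e. y^δ = y), the sequence (E⁰(k))_{k≥0} is non-increasing, and for each k ≥ 0 there holds ‖F(x_k⁰) − y‖² ≤ (α−1)E⁰(0)/(ω(k+α−2)²) and ‖w_k⁰ − x_*‖² ≤ E⁰(0)/(α−1). -/

import Mathlib

open Metric Filter
open scoped RealInnerProductSpace Topology

set_option maxHeartbeats 2000000

/-- In the exact-data case the energy sequence `(E⁰(k))` is non-increasing,
and `‖F(x_k⁰) − y‖² ≤ (α−1)E⁰(0)/(ω(k+α−2)²)` and `‖w_k⁰ − x_*‖² ≤ E⁰(0)/(α−1)` for all `k`. -/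
theorem nesterov_exact_energy_decay
    {X Y : Type*} [NormedAddCommGroup X] [InnerProductSpace ℝ X] [CompleteSpace X]
    [NormedAddCommGroup Y] [InnerProductSpace ℝ Y] [CompleteSpace Y]
    (x₀ : X) (ρ : ℝ) (hρ : 0 < ρ)
    (F : X → Y) (F' : X → X →L[ℝ] Y)
    (hF : ∀ u ∈ closedBall x₀ (6 * ρ), HasFDerivAt F (F' u) u)
    (ωb : ℝ) (hωb : ∀ u ∈ closedBall x₀ (6 * ρ), ‖F' u‖ ≤ ωb)
    (y : Y) (xstar : X) (hxstar : xstar ∈ closedBall x₀ ρ) (hFxstar : F xstar = y)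
    -- the exact residual functional
    (Φ0 : X → ℝ)
    (hΦ0 : ∀ u, Φ0 u = (1 / 2) * ‖F u - y‖ ^ 2)
    -- convexity and Lipschitz continuity of the gradient on `B_{6ρ}(x₀)`
    (hconv : ConvexOn ℝ (closedBall x₀ (6 * ρ)) Φ0)
    (L : ℝ) (hL : 0 < L)
    (hLip : ∀ u ∈ closedBall x₀ (6 * ρ), ∀ v ∈ closedBall x₀ (6 * ρ),
      ‖(ContinuousLinearMap.adjoint (F' u)) (F u - y) -
        (ContinuousLinearMap.adjoint (F' v)) (F v - y)‖ ≤ L * ‖u - v‖)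
    (α ω : ℝ) (hα : 3 < α) (hω : 0 < ω) (hωL : ω < 1 / L)
    -- `P` is the metric projection onto the closed ball `B_{2ρ}(x₀)`
    (P : X → X)
    (hP_mem : ∀ u, P u ∈ closedBall x₀ (2 * ρ))
    (hP_proj : ∀ u, ∀ v ∈ closedBall x₀ (2 * ρ), ‖u - P u‖ ≤ ‖u - v‖)
    -- the exact-data Nesterov iteration (with `x₋₁ = x₀` via truncated subtraction)
    (x z : ℕ → X)
    (hx0 : x 0 = x₀)
    (hz : ∀ k : ℕ, z k = x k + (((k : ℝ) - 1) / ((k : ℝ) + α - 1)) • (x k - x (k - 1)))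
    (hx : ∀ k : ℕ, x (k + 1) = P (z k + ω • (ContinuousLinearMap.adjoint (F' (z k))) (y - F (z k))))
    -- the auxiliary sequence `w` and the energy `E`
    (w : ℕ → X)
    (hw : ∀ k : ℕ, w k = x k + (((k : ℝ) - 1) / (α - 1)) • (x k - x (k - 1)))
    (E : ℕ → ℝ)
    (hE : ∀ k : ℕ, E k = (2 * ω / (α - 1)) * ((k : ℝ) + α - 2) ^ 2 * Φ0 (x k)
      + (α - 1) * ‖w k - xstar‖ ^ 2) :
    (∀ k : ℕ, E (k + 1) ≤ E k) ∧
    (∀ k : ℕ, ‖F (x k) - y‖ ^ 2 ≤ (α - 1) * E 0 / (ω * ((k : ℝ) + α - 2) ^ 2)) ∧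
    (∀ k : ℕ, ‖w k - xstar‖ ^ 2 ≤ E 0 / (α - 1)) := by
  have hα1 : (0:ℝ) < α - 1 := by linarith
  have hα2 : (0:ℝ) < α - 2 := by linarith
  have hρ2 : (0:ℝ) < 2*ρ := by linarith
  have hB26 : closedBall x₀ (2*ρ) ⊆ closedBall x₀ (6*ρ) :=
    closedBall_subset_closedBall (by linarith)
  set Gr : X → X := fun u => (ContinuousLinearMap.adjoint (F' u)) (F u - y) with hGrdef
  have hΦnn : ∀ u, 0 ≤ Φ0 u := fun u => by rw [hΦ0]; positivity
  have hΦstar : Φ0 xstar = 0 := by rw [hΦ0, hFxstar]; simp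
  have hxmem : ∀ k, x k ∈ closedBall x₀ (2*ρ) := by
    intro k
    cases k with
    | zero => rw [hx0]; exact mem_closedBall_self (by positivity)
    | succ n => rw [hx n]; exact hP_mem _
  have hxstar2 : xstar ∈ closedBall x₀ (2*ρ) :=
    closedBall_subset_closedBall (by linarith) hxstar
  have hxnorm : ∀ k, ‖x k - x₀‖ ≤ 2*ρ := by
    intro k; have := hxmem k; rwa [mem_closedBall, dist_eq_norm] at this
  have hzmem : ∀ k, z k ∈ closedBall x₀ (6*ρ) := by
    intro k
    have hk : (0:ℝ) ≤ (k:ℝ) := Nat.cast_nonneg k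
    have ht : (0:ℝ) < (k:ℝ)+α-1 := by linarith
    have hco : |((k:ℝ)-1)/((k:ℝ)+α-1)| ≤ 1 := by
      rw [abs_div, abs_of_pos ht, div_le_one ht, abs_le]
      constructor <;> linarith
    rw [mem_closedBall, dist_eq_norm, hz k]
    have hre : x k + (((k:ℝ)-1)/((k:ℝ)+α-1)) • (x k - x (k-1)) - x₀
        = (x k - x₀) + (((k:ℝ)-1)/((k:ℝ)+α-1)) • ((x k - x₀) - (x (k-1) - x₀)) := by
      module
    rw [hre]
    have h1 := hxnorm k
    have h2 := hxnorm (k-1)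
    calc ‖(x k - x₀) + (((k:ℝ)-1)/((k:ℝ)+α-1)) • ((x k - x₀) - (x (k-1) - x₀))‖
        ≤ ‖x k - x₀‖ + ‖(((k:ℝ)-1)/((k:ℝ)+α-1)) • ((x k - x₀) - (x (k-1) - x₀))‖ :=
          norm_add_le _ _
      _ ≤ ‖x k - x₀‖ + |((k:ℝ)-1)/((k:ℝ)+α-1)| * (‖x k - x₀‖ + ‖x (k-1) - x₀‖) := by
          rw [norm_smul, Real.norm_eq_abs]
          gcongr
          exact norm_sub_le _ _
      _ ≤ 2*ρ + 1 * (2*ρ + 2*ρ) := by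
          have h3 : |((k:ℝ)-1)/((k:ℝ)+α-1)| * (‖x k - x₀‖ + ‖x (k-1) - x₀‖) ≤ 1 * (2*ρ+2*ρ) := by
            apply mul_le_mul hco (by linarith) (by positivity) one_pos.le
          linarith
      _ ≤ 6*ρ := by linarith
  -- line derivative of Φ0
  have hline : ∀ (a u : X) (t : ℝ), a + t • u ∈ closedBall x₀ (6*ρ) →
      HasDerivAt (fun s : ℝ => Φ0 (a + s • u)) (⟪Gr (a + t • u), u⟫) t := by
    intro a u t hmem
    have hc : HasDerivAt (fun s : ℝ => a + s • u) u t := by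
      simpa using ((hasDerivAt_id t).smul_const u).const_add a
    have hq : HasDerivAt (fun s : ℝ => F (a + s • u) - y) ((F' (a+t•u)) u) t :=
      ((hF _ hmem).comp_hasDerivAt t hc).sub_const y
    have hin : HasDerivAt (fun s : ℝ => ⟪F (a+s•u) - y, F (a+s•u) - y⟫)
        (⟪F (a+t•u) - y, (F' (a+t•u)) u⟫ + ⟪(F' (a+t•u)) u, F (a+t•u) - y⟫) t :=
      hq.inner ℝ hq
    have heq : (fun s : ℝ => Φ0 (a + s • u))
        = fun s : ℝ => (1/2) * ⟪F (a+s•u) - y, F (a+s•u) - y⟫ := by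
      funext s; rw [hΦ0, real_inner_self_eq_norm_sq]
    rw [heq]
    have h2 := hin.const_mul (1/2)
    convert h2 using 1
    show (⟪(ContinuousLinearMap.adjoint (F' (a+t•u))) (F (a+t•u) - y), u⟫ : ℝ) = _
    rw [ContinuousLinearMap.adjoint_inner_left]
    rw [real_inner_comm ((F' (a+t•u)) u) (F (a+t•u) - y)]
    ring
    all_goals rfl
  -- convexity gradient inequality
  have hconvineq : ∀ zz ∈ closedBall x₀ (6*ρ), ∀ v ∈ closedBall x₀ (6*ρ),
      ⟪Gr zz, v - zz⟫ ≤ Φ0 v - Φ0 zz := by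
    intro zz hzz v hv
    have hd : HasDerivAt (fun s : ℝ => Φ0 (zz + s • (v - zz))) ⟪Gr zz, v - zz⟫ 0 := by
      have h := hline zz (v - zz) 0 (by simpa using hzz)
      simpa using h
    have hslope := hasDerivAt_iff_tendsto_slope.mp hd
    have hslope' : Tendsto (slope (fun s : ℝ => Φ0 (zz + s • (v - zz))) 0) (𝓝[>] 0)
        (𝓝 ⟪Gr zz, v - zz⟫) :=
      hslope.mono_left (nhdsWithin_mono 0 (fun t ht => ne_of_gt ht))
    refine le_of_tendsto hslope' ?_
    filter_upwards [Ioc_mem_nhdsGT_of_mem (Set.mem_Ico.mpr ⟨le_refl (0:ℝ), one_pos⟩)]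
    intro t ht
    have ht0 : 0 < t := ht.1
    have hcv := hconv.2 hzz hv (by linarith [ht.2] : (0:ℝ) ≤ 1 - t) (le_of_lt ht0) (by ring)
    have hre : (1-t) • zz + t • v = zz + t • (v - zz) := by module
    rw [hre] at hcv
    rw [slope_def_field]
    simp only [sub_zero, zero_smul, add_zero]
    rw [div_le_iff₀ ht0]
    simp only [smul_eq_mul] at hcv
    nlinarith [hcv]
  -- projection variational inequality
  have hproj : ∀ u : X, ∀ v ∈ closedBall x₀ (2*ρ), ⟪u - P u, v - P u⟫ ≤ 0 := by
    intro u v hv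
    have hbound : ∀ t ∈ Set.Ioc (0:ℝ) 1, 2*⟪u - P u, v - P u⟫ ≤ t * ‖v - P u‖^2 := by
      intro t ht
      have hq : (1 - t) • P u + t • v ∈ closedBall x₀ (2*ρ) :=
        (convex_closedBall x₀ (2*ρ)) (hP_mem u) hv (by linarith [ht.2]) (le_of_lt ht.1) (by ring)
      have h1 : ‖u - P u‖ ≤ ‖u - ((1 - t) • P u + t • v)‖ := hP_proj u _ hq
      have hre : u - ((1 - t) • P u + t • v) = (u - P u) - t • (v - P u) := by module
      rw [hre] at h1
      have h2 : ‖(u - P u) - t • (v - P u)‖^2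
          = ‖u - P u‖^2 - 2*(t*⟪u - P u, v - P u⟫) + t^2*‖v - P u‖^2 := by
        rw [sub_eq_add_neg, norm_add_sq_real]
        rw [inner_neg_right, real_inner_smul_right, norm_neg, norm_smul, Real.norm_eq_abs,
          abs_of_pos ht.1, mul_pow]
        ring
      have h3 : ‖u - P u‖^2 ≤ ‖(u - P u) - t • (v - P u)‖^2 := by
        have := norm_nonneg (u - P u); nlinarith [h1]
      rw [h2] at h3
      have ht0 := ht.1
      nlinarith [h3]
    have hlim : Tendsto (fun t : ℝ => t * ‖v - P u‖^2) (𝓝[>] (0:ℝ)) (𝓝 0) := by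
      have : Tendsto (fun t : ℝ => t * ‖v - P u‖^2) (𝓝 (0:ℝ)) (𝓝 (0 * ‖v - P u‖^2)) :=
        (continuous_id.mul continuous_const).tendsto 0
      simpa using this.mono_left nhdsWithin_le_nhds
    have h4 : 2*⟪u - P u, v - P u⟫ ≤ 0 := by
      refine ge_of_tendsto hlim ?_
      filter_upwards [Ioc_mem_nhdsGT_of_mem (Set.mem_Ico.mpr ⟨le_refl (0:ℝ), one_pos⟩)]
      exact fun t ht => hbound t ht
    linarith
  -- descent lemma
  have hdescent : ∀ zz ∈ closedBall x₀ (6*ρ), ∀ p ∈ closedBall x₀ (6*ρ),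
      Φ0 p ≤ Φ0 zz + ⟪Gr zz, p - zz⟫ + (L/2) * ‖p - zz‖^2 := by
    intro zz hzz p hp
    have hmem : ∀ t ∈ Set.Icc (0:ℝ) 1, zz + t • (p - zz) ∈ closedBall x₀ (6*ρ) := by
      intro t ht
      have h := (convex_closedBall x₀ (6*ρ)) hzz hp (by linarith [ht.2] : (0:ℝ) ≤ 1 - t) ht.1
        (by ring)
      have hre : (1-t) • zz + t • p = zz + t • (p - zz) := by module
      rwa [hre] at h
    set h : ℝ → ℝ := fun t => Φ0 (zz + t • (p - zz)) - t*⟪Gr zz, p - zz⟫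
      - (L/2)*t^2*‖p - zz‖^2 with hhdef
    have hderiv : ∀ t ∈ Set.Icc (0:ℝ) 1, HasDerivAt h
        (⟪Gr (zz + t • (p - zz)), p - zz⟫ - ⟪Gr zz, p - zz⟫ - L*t*‖p - zz‖^2) t := by
      intro t ht
      have h1 := hline zz (p - zz) t (hmem t ht)
      have h2 : HasDerivAt (fun s : ℝ => s*⟪Gr zz, p - zz⟫) ⟪Gr zz, p - zz⟫ t := by
        simpa using (hasDerivAt_id t).mul_const ⟪Gr zz, p - zz⟫
      have h3 : HasDerivAt (fun s : ℝ => (L/2)*s^2*‖p - zz‖^2) (L*t*‖p - zz‖^2) t := by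
        have h4 := ((hasDerivAt_pow 2 t).const_mul (L/2)).mul_const (‖p - zz‖^2)
        have h5 : L/2 * ((2:ℕ) * t ^ (2 - 1)) * ‖p - zz‖^2 = L*t*‖p - zz‖^2 := by
          push_cast
          ring
        rw [h5] at h4
        exact h4
      exact (h1.sub h2).sub h3
    have hnonpos : ∀ t ∈ Set.Icc (0:ℝ) 1,
        ⟪Gr (zz + t • (p - zz)), p - zz⟫ - ⟪Gr zz, p - zz⟫ - L*t*‖p - zz‖^2 ≤ 0 := by
      intro t ht
      have hdiff : ⟪Gr (zz + t • (p - zz)), p - zz⟫ - ⟪Gr zz, p - zz⟫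
          = ⟪Gr (zz + t • (p - zz)) - Gr zz, p - zz⟫ := (inner_sub_left _ _ _).symm
      rw [hdiff]
      have hlip := hLip (zz + t • (p - zz)) (hmem t ht) zz hzz
      have hlip' : ‖Gr (zz + t • (p - zz)) - Gr zz‖ ≤ L * (t * ‖p - zz‖) := by
        have hrw : zz + t • (p - zz) - zz = t • (p - zz) := by module
        simp only [hGrdef]
        calc ‖(ContinuousLinearMap.adjoint (F' (zz + t • (p - zz)))) (F (zz + t • (p - zz)) - y)
              - (ContinuousLinearMap.adjoint (F' zz)) (F zz - y)‖
            ≤ L * ‖zz + t • (p - zz) - zz‖ := hlip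
          _ = L * (t * ‖p - zz‖) := by
              rw [hrw, norm_smul, Real.norm_eq_abs, abs_of_nonneg ht.1]
      have hcs := real_inner_le_norm (Gr (zz + t • (p - zz)) - Gr zz) (p - zz)
      nlinarith [norm_nonneg (p - zz), hcs, hlip', norm_nonneg (Gr (zz + t • (p - zz)) - Gr zz)]
    have hmono : h 1 ≤ h 0 := by
      have hcont : ContinuousOn h (Set.Icc 0 1) :=
        fun t ht => ((hderiv t ht).continuousAt).continuousWithinAt
      have hdiffOn : DifferentiableOn ℝ h (interior (Set.Icc (0:ℝ) 1)) := by
        rw [interior_Icc]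
        exact fun t ht => ((hderiv t (Set.mem_Icc_of_Ioo ht)).differentiableAt).differentiableWithinAt
      have hderiv_nonpos : ∀ t ∈ interior (Set.Icc (0:ℝ) 1), deriv h t ≤ 0 := by
        rw [interior_Icc]
        intro t ht
        rw [(hderiv t (Set.mem_Icc_of_Ioo ht)).deriv]
        exact hnonpos t (Set.mem_Icc_of_Ioo ht)
      exact antitoneOn_of_deriv_nonpos (convex_Icc 0 1) hcont hdiffOn hderiv_nonpos
        (Set.mem_Icc.mpr ⟨le_refl 0, zero_le_one⟩) (Set.mem_Icc.mpr ⟨zero_le_one, le_refl 1⟩)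
        zero_le_one
    have h0 : h 0 = Φ0 zz := by
      rw [hhdef]; simp
    have h1 : h 1 = Φ0 p - ⟪Gr zz, p - zz⟫ - (L/2)*‖p - zz‖^2 := by
      rw [hhdef]; simp
    rw [h0, h1] at hmono
    linarith
  -- key inequality
  have hkey : ∀ k, ∀ v ∈ closedBall x₀ (2*ρ),
      2*ω*(Φ0 (x (k+1)) - Φ0 v) ≤ ‖z k - v‖^2 - ‖x (k+1) - v‖^2 := by
    intro k v hv
    have hz6 := hzmem k
    have hx6 : x (k+1) ∈ closedBall x₀ (6*ρ) := hB26 (hxmem _)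
    have hv6 := hB26 hv
    have hA := hdescent (z k) hz6 (x (k+1)) hx6
    have hB := hconvineq (z k) hz6 v hv6
    have harg : z k + ω • (ContinuousLinearMap.adjoint (F' (z k))) (y - F (z k))
        = z k - ω • Gr (z k) := by
      simp only [hGrdef]
      rw [show y - F (z k) = -(F (z k) - y) by abel, map_neg, smul_neg]
      abel
    have hPx : P (z k - ω • Gr (z k)) = x (k+1) := by
      rw [hx k, harg]
    have hC := hproj (z k - ω • Gr (z k)) v hv
    rw [hPx] at hC
    -- expand hC
    have hC' : ω*⟪Gr (z k), x (k+1) - v⟫ ≤ ⟪z k - x (k+1), x (k+1) - v⟫ := by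
      have hrw : z k - ω • Gr (z k) - x (k+1) = (z k - x (k+1)) + (-(ω • Gr (z k))) := by module
      rw [hrw, inner_add_left, inner_neg_left, real_inner_smul_left] at hC
      have hflip : ⟪z k - x (k+1), v - x (k+1)⟫ = -⟪z k - x (k+1), x (k+1) - v⟫ := by
        rw [← inner_neg_right]; congr 1; abel
      have hflip2 : ⟪Gr (z k), v - x (k+1)⟫ = -⟪Gr (z k), x (k+1) - v⟫ := by
        rw [← inner_neg_right]; congr 1; abel
      rw [hflip, hflip2] at hC
      linarith
    have hnormid : ‖z k - v‖^2 = ‖z k - x (k+1)‖^2 + 2*⟪z k - x (k+1), x (k+1) - v⟫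
        + ‖x (k+1) - v‖^2 := by
      rw [show z k - v = (z k - x (k+1)) + (x (k+1) - v) by abel, norm_add_sq_real]
    have hBrw : ⟪Gr (z k), x (k+1) - z k⟫ + ⟪Gr (z k), v - z k⟫ * (-1)
        = ⟪Gr (z k), x (k+1) - v⟫ := by
      rw [show ⟪Gr (z k), x (k+1) - z k⟫ + ⟪Gr (z k), v - z k⟫ * (-1)
        = ⟪Gr (z k), x (k+1) - z k⟫ - ⟪Gr (z k), v - z k⟫ by ring, ← inner_sub_right]
      congr 1; abel
    have hnormrev : ‖x (k+1) - z k‖ = ‖z k - x (k+1)‖ := norm_sub_rev _ _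
    have hωL' : ω * L ≤ 1 := by
      rw [lt_div_iff₀ hL] at hωL; linarith
    have e2 : Φ0 (x (k+1)) - Φ0 v ≤ ⟪Gr (z k), x (k+1) - v⟫ + (L/2)*‖z k - x (k+1)‖^2 := by
      rw [hnormrev] at hA
      nlinarith [hA, hB, hBrw]
    nlinarith [e2, hC', hnormid, mul_le_mul_of_nonneg_left e2 (by linarith : (0:ℝ) ≤ 2*ω),
      sq_nonneg ‖z k - x (k+1)‖, hωL', hω]
  -- energy decay
  have hEdec : ∀ k : ℕ, E (k+1) ≤ E k := by
    intro k
    have hkr : (0:ℝ) ≤ (k:ℝ) := Nat.cast_nonneg k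
    have hT : (0:ℝ) < (k:ℝ) + α - 1 := by linarith
    set T : ℝ := (k:ℝ) + α - 1 with hTdef
    set lam : ℝ := (α-1)/T with hlamdef
    have hlam0 : 0 < lam := div_pos hα1 hT
    have hlam1 : lam ≤ 1 := by rw [hlamdef, div_le_one hT]; linarith
    set v : X := x k + lam • (xstar - x k) with hvdef
    have hvmem : v ∈ closedBall x₀ (2*ρ) := by
      have h := (convex_closedBall x₀ (2*ρ)) (hxmem k) hxstar2 (by linarith : (0:ℝ) ≤ 1 - lam)
        (le_of_lt hlam0) (by ring)
      have hre : (1-lam) • x k + lam • xstar = v := by rw [hvdef]; module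
      rwa [hre] at h
    have hΦv : Φ0 v ≤ (1-lam) * Φ0 (x k) := by
      have h := hconv.2 (hB26 (hxmem k)) (hB26 hxstar2) (by linarith : (0:ℝ) ≤ 1 - lam)
        (le_of_lt hlam0) (by ring)
      have hre : (1-lam) • x k + lam • xstar = v := by rw [hvdef]; module
      rw [hre, hΦstar] at h
      simp only [smul_eq_mul, mul_zero, add_zero] at h
      linarith [h]
    have hT0 : T ≠ 0 := ne_of_gt hT
    have hid1 : z k - v = lam • (w k - xstar) := by
      rw [hz k, hw k, hvdef, hlamdef, hTdef]
      match_scalars <;> field_simp <;> ring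
    have hid2 : x (k+1) - v = lam • (w (k+1) - xstar) := by
      rw [hw (k+1), hvdef, hlamdef, hTdef]
      have hsub : (k + 1 - 1 : ℕ) = k := rfl
      rw [hsub]
      push_cast
      match_scalars <;> field_simp [show (k:ℝ)+α-1 ≠ 0 from ne_of_gt hT] <;> ring
    have hkey' := hkey k v hvmem
    have hn1 : ‖z k - v‖^2 = lam^2 * ‖w k - xstar‖^2 := by
      rw [hid1, norm_smul, Real.norm_eq_abs, abs_of_pos hlam0, mul_pow]
    have hn2 : ‖x (k+1) - v‖^2 = lam^2 * ‖w (k+1) - xstar‖^2 := by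
      rw [hid2, norm_smul, Real.norm_eq_abs, abs_of_pos hlam0, mul_pow]
    rw [hn1, hn2] at hkey'
    set Wk : ℝ := ‖w k - xstar‖^2 with hWk
    set Wk1 : ℝ := ‖w (k+1) - xstar‖^2 with hWk1
    set Φ1 : ℝ := Φ0 (x (k+1)) with hΦ1
    set Φk : ℝ := Φ0 (x k) with hΦk
    have hlT2 : lam^2 * T^2 = (α-1)^2 := by
      rw [hlamdef]; field_simp
    have hM : 2*ω*(T^2*Φ1) - 2*ω*(T^2*Φ0 v) ≤ (α-1)^2*(Wk - Wk1) := by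
      calc 2*ω*(T^2*Φ1) - 2*ω*(T^2*Φ0 v) = T^2*(2*ω*(Φ1 - Φ0 v)) := by ring
        _ ≤ T^2*(lam^2*Wk - lam^2*Wk1) :=
            mul_le_mul_of_nonneg_left hkey' (sq_nonneg T)
        _ = (lam^2*T^2)*(Wk - Wk1) := by ring
        _ = (α-1)^2*(Wk - Wk1) := by rw [hlT2]
    have hTlam : T^2*(1-lam) = (k:ℝ)*T := by
      rw [hlamdef]; field_simp; ring
    have hv2 : 2*ω*(T^2*Φ0 v) ≤ 2*ω*((k:ℝ)*T*Φk) := by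
      have h := mul_le_mul_of_nonneg_left hΦv (by positivity : (0:ℝ) ≤ 2*ω*T^2)
      calc 2*ω*(T^2*Φ0 v) = 2*ω*T^2 * Φ0 v := by ring
        _ ≤ 2*ω*T^2 * ((1-lam)*Φk) := h
        _ = 2*ω*(T^2*(1-lam)*Φk) := by ring
        _ = 2*ω*((k:ℝ)*T*Φk) := by rw [show T^2*(1-lam)*Φk = (T^2*(1-lam))*Φk by ring, hTlam]
    have hcoef : (k:ℝ)*T ≤ ((k:ℝ)+α-2)^2 := by
      rw [hTdef]; nlinarith [hkr, hα]
    have hv3 : 2*ω*((k:ℝ)*T*Φk) ≤ 2*ω*(((k:ℝ)+α-2)^2*Φk) := by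
      have hΦknn : 0 ≤ Φk := hΦnn (x k)
      have := mul_le_mul_of_nonneg_right hcoef hΦknn
      nlinarith [this, hω]
    have hmain : 2*ω*(T^2*Φ1) ≤ 2*ω*(((k:ℝ)+α-2)^2*Φk) + (α-1)^2*(Wk - Wk1) := by
      linarith
    -- divide by α-1
    have hgoal' : (2*ω/(α-1))*(T^2*Φ1) ≤ (2*ω/(α-1))*(((k:ℝ)+α-2)^2*Φk) + (α-1)*(Wk - Wk1) := by
      have hd : (2*ω*(T^2*Φ1))/(α-1) ≤ (2*ω*(((k:ℝ)+α-2)^2*Φk) + (α-1)^2*(Wk - Wk1))/(α-1) := by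
        gcongr
      calc (2*ω/(α-1))*(T^2*Φ1) = (2*ω*(T^2*Φ1))/(α-1) := by ring
        _ ≤ (2*ω*(((k:ℝ)+α-2)^2*Φk) + (α-1)^2*(Wk - Wk1))/(α-1) := hd
        _ = (2*ω/(α-1))*(((k:ℝ)+α-2)^2*Φk) + (α-1)*(Wk - Wk1) := by
            field_simp
    rw [hE (k+1), hE k]
    push_cast
    rw [← hΦ1, ← hΦk, ← hWk, ← hWk1]
    have hTT : ((k:ℝ) + 1 + α - 2) = T := by rw [hTdef]; ring
    rw [hTT]
    linarith [hgoal']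
  -- monotonicity to E 0
  have hEle : ∀ k : ℕ, E k ≤ E 0 := by
    intro k
    induction k with
    | zero => exact le_refl _
    | succ n ih => exact le_trans (hEdec n) ih
  refine ⟨hEdec, ?_, ?_⟩
  · intro k
    have hkr : (0:ℝ) ≤ (k:ℝ) := Nat.cast_nonneg k
    have ht : (0:ℝ) < (k:ℝ) + α - 2 := by linarith
    have h1 : (2*ω/(α-1))*((k:ℝ)+α-2)^2*Φ0 (x k) ≤ E 0 := by
      have h2 := hE k
      have h3 : (0:ℝ) ≤ (α-1)*‖w k - xstar‖^2 := by positivity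
      linarith [hEle k]
    have hFk : ‖F (x k) - y‖^2 = 2*Φ0 (x k) := by rw [hΦ0]; ring
    rw [hFk, le_div_iff₀ (by positivity : (0:ℝ) < ω*((k:ℝ)+α-2)^2)]
    have e : (α-1)*((2*ω/(α-1))*((k:ℝ)+α-2)^2*Φ0 (x k))
        = 2*Φ0 (x k)*(ω*((k:ℝ)+α-2)^2) := by
      field_simp
    have h4 := mul_le_mul_of_nonneg_left h1 (le_of_lt hα1)
    linarith [e ▸ h4]
  · intro k
    have hkr : (0:ℝ) ≤ (k:ℝ) := Nat.cast_nonneg k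
    have ht : (0:ℝ) < (k:ℝ) + α - 2 := by linarith
    have h1 : (α-1)*‖w k - xstar‖^2 ≤ E 0 := by
      have h2 := hE k
      have h3 : (0:ℝ) ≤ (2*ω/(α-1))*((k:ℝ)+α-2)^2*Φ0 (x k) := by
        have := hΦnn (x k)
        positivity
      linarith [hEle k]
    rw [le_div_iff₀ hα1]
    linarith
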